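/- Let g be convex and f be μ_f-strongly convex, both differentiable on ℝ^n, and let λ_{k-1} > λ_k > 0. Then the minimizers x*_{λ_k} and x*_{λ_{k-1}} of g + λ_k f and g + λ_{k-1} f respectively satisfy ‖x*_{λ_k} - x*_{λ_{k-1}}‖ ≤ (2/μ_f)(1 - λ_k/λ_{k-1}) ‖∇f(x*_{λ_k})‖. -/

import Mathlib

open Set Filter InnerProductSpace Topology

section aux

variable {E : Type*} [NormedAddCommGroup E] [InnerProductSpace ℝ E] [CompleteSpace E]

/-- At a minimizer of a strongly convex-type combination, a quadratic growth bound holds. -/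
lemma strong_min_ineq {h : E → ℝ} {m : ℝ}
    (hh : ∀ ⦃a b : ℝ⦄, 0 ≤ a → 0 ≤ b → a + b = 1 → ∀ x y : E,
      h (a • x + b • y) ≤ a * h x + b * h y - a * b * (m / 2 * ‖x - y‖ ^ 2))
    {x : E} (hx : ∀ y, h x ≤ h y) (y : E) :
    h x + m / 2 * ‖y - x‖ ^ 2 ≤ h y := by
  set c : ℝ := m / 2 * ‖y - x‖ ^ 2 with hc
  have key : ∀ b : ℝ, b ∈ Set.Ioo (0 : ℝ) 1 → b * c ≤ h y - h x := by
    rintro b ⟨hb0, hb1⟩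
    have ha0 : (0 : ℝ) ≤ 1 - b := by linarith
    have hcomb := hh ha0 hb0.le (by ring) y x
    have hxle := hx ((1 - b) • y + b • x)
    have h3 : h x ≤ (1 - b) * h y + b * h x - (1 - b) * b * c := le_trans hxle hcomb
    have h4 : (1 - b) * (b * c) ≤ (1 - b) * (h y - h x) := by nlinarith [h3]
    have h5 := (mul_le_mul_iff_right₀ (show (0:ℝ) < 1 - b by linarith)).mp h4
    linarith
  have hne : (𝓝[<] (1 : ℝ)).NeBot := inferInstance
  have htend : Tendsto (fun b : ℝ => b * c) (𝓝[<] (1 : ℝ)) (𝓝 c) := by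
    have : Tendsto (fun b : ℝ => b * c) (𝓝 (1 : ℝ)) (𝓝 (1 * c)) :=
      (continuous_mul_right c).tendsto 1
    simpa using this.mono_left nhdsWithin_le_nhds
  have hev : ∀ᶠ b in 𝓝[<] (1 : ℝ), b * c ≤ h y - h x := by
    filter_upwards [Ioo_mem_nhdsLT (by norm_num : (0:ℝ) < 1)] with b hb
    exact key b hb
  have := le_of_tendsto htend hev
  linarith

/-- First-order condition for a convex differentiable function. -/
lemma convex_grad_ineq {f : E → ℝ} (hf : ConvexOn ℝ Set.univ f) (hfd : Differentiable ℝ f)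
    (x y : E) : ⟪gradient f x, y - x⟫_ℝ ≤ f y - f x := by
  have hc : HasDerivAt (fun t : ℝ => x + t • (y - x)) (y - x) 0 := by
    simpa using ((hasDerivAt_id (0 : ℝ)).smul_const (y - x)).const_add x
  have hgrad : HasFDerivAt f (toDual ℝ E (gradient f x)) x := (hfd x).hasGradientAt.hasFDerivAt
  have hgrad' : HasFDerivAt f (toDual ℝ E (gradient f x)) ((fun t : ℝ => x + t • (y - x)) 0) := by
    simpa using hgrad
  have hφ : HasDerivAt (fun t : ℝ => f (x + t • (y - x))) (⟪gradient f x, y - x⟫_ℝ) 0 := by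
    exact (hgrad'.comp_hasDerivAt 0 hc).congr_deriv (by rw [InnerProductSpace.toDual_apply_apply])
  rw [hasDerivAt_iff_tendsto_slope] at hφ
  have hφ' := hφ.mono_left (nhdsWithin_mono 0 (by intro t ht; exact ne_of_gt ht : Set.Ioi (0:ℝ) ⊆ {(0:ℝ)}ᶜ))
  refine le_of_tendsto hφ' ?_
  filter_upwards [Ioo_mem_nhdsGT (by norm_num : (0:ℝ) < 1)] with t ⟨ht0, ht1⟩
  have hcv := hf.2 (Set.mem_univ y) (Set.mem_univ x) ht0.le (by linarith : (0:ℝ) ≤ 1 - t) (by ring)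
  simp only [smul_eq_mul] at hcv
  have hpt : t • y + (1 - t) • x = x + t • (y - x) := by
    module
  rw [hpt] at hcv
  rw [slope_def_field]
  have : (f (x + t • (y - x)) - f x) / (t - 0) ≤ f y - f x := by
    rw [sub_zero, div_le_iff₀ ht0]
    nlinarith [hcv]
  simpa [slope, vsub_eq_sub] using this

end aux

theorem stmt_6 (n : ℕ) (f g : EuclideanSpace ℝ (Fin n) → ℝ) (μf : ℝ) (hμf : 0 < μf)
    (hg : ConvexOn ℝ Set.univ g) (hgd : Differentiable ℝ g)
    (hf : StrongConvexOn Set.univ μf f) (hfd : Differentiable ℝ f)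
    (lamk lamk1 : ℝ) (hlam : 0 < lamk) (hlam1 : lamk < lamk1)
    (xk xk1 : EuclideanSpace ℝ (Fin n))
    (hxk : ∀ y, g xk + lamk * f xk ≤ g y + lamk * f y)
    (hxk1 : ∀ y, g xk1 + lamk1 * f xk1 ≤ g y + lamk1 * f y) :
    ‖xk - xk1‖ ≤ (2 / μf) * (1 - lamk / lamk1) * ‖gradient f xk‖ := by
  have hlam1' : 0 < lamk1 := hlam.trans hlam1
  -- strong convexity inequality for g + lam * f
  have hstrong : ∀ lam : ℝ, 0 < lam → ∀ ⦃a b : ℝ⦄, 0 ≤ a → 0 ≤ b → a + b = 1 →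
      ∀ x y : EuclideanSpace ℝ (Fin n),
      g (a • x + b • y) + lam * f (a • x + b • y)
        ≤ a * (g x + lam * f x) + b * (g y + lam * f y)
          - a * b * (lam * μf / 2 * ‖x - y‖ ^ 2) := by
    intro lam hl a b ha hb hab x y
    have h1 := hg.2 (Set.mem_univ x) (Set.mem_univ y) ha hb hab
    have h2 := hf.2 (Set.mem_univ x) (Set.mem_univ y) ha hb hab
    simp only [smul_eq_mul] at h1 h2
    nlinarith [mul_le_mul_of_nonneg_left h2 hl.le]
  have hk := strong_min_ineq (h := fun z => g z + lamk * f z) (m := lamk * μf)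
    (fun a b ha hb hab x y => hstrong lamk hlam ha hb hab x y) hxk xk1
  have hk1 := strong_min_ineq (h := fun z => g z + lamk1 * f z) (m := lamk1 * μf)
    (fun a b ha hb hab x y => hstrong lamk1 hlam1' ha hb hab x y) hxk1 xk
  have hnorm : ‖xk1 - xk‖ = ‖xk - xk1‖ := norm_sub_rev _ _
  rw [hnorm] at hk
  set D := ‖xk - xk1‖ with hD
  set G := ‖gradient f xk‖ with hG
  have hD0 : 0 ≤ D := norm_nonneg _
  have hG0 : 0 ≤ G := norm_nonneg _
  -- sum of the two inequalities
  have hsum : (lamk + lamk1) * μf / 2 * D ^ 2 ≤ (lamk1 - lamk) * (f xk - f xk1) := by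
    nlinarith [hk, hk1]
  -- gradient inequality and Cauchy–Schwarz
  have hgrad := convex_grad_ineq (hf.convexOn (fun r => by positivity)) hfd xk xk1
  have hCS : -(G * D) ≤ ⟪gradient f xk, xk1 - xk⟫_ℝ := by
    have h1 := abs_real_inner_le_norm (gradient f xk) (xk1 - xk)
    have h2 := neg_abs_le (⟪gradient f xk, xk1 - xk⟫_ℝ)
    rw [hnorm] at h1
    linarith
  have hfd' : f xk - f xk1 ≤ G * D := by linarith [hgrad, hCS]
  have hmain : (lamk + lamk1) * μf / 2 * D ^ 2 ≤ (lamk1 - lamk) * (G * D) := by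
    nlinarith [hsum, hfd', sub_pos.mpr hlam1]
  have hrhs : (2 / μf) * (1 - lamk / lamk1) * G = 2 * (lamk1 - lamk) * G / (μf * lamk1) := by
    field_simp
  rw [hrhs, le_div_iff₀ (by positivity)]
  rcases eq_or_lt_of_le hD0 with h | h
  · rw [← h, zero_mul]
    exact mul_nonneg (mul_nonneg (by norm_num) (by linarith)) hG0
  · nlinarith [hmain, mul_pos hμf h, mul_pos hlam h, mul_pos h h,
      mul_nonneg (mul_nonneg hμf.le hlam.le) (mul_pos h h).le]
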